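/- Let b ∈ [0, 4] and let ρ_b be the 4 × 4 density matrix (1/6)·[[1,0,0,1],[0,4−b,0,0],[0,0,b,0],[1,0,0,1]], and let σ_z = diag(1, −1). Then √F(ρ_b, (σ_z ⊗ₖ I_2) ρ_b (σ_z ⊗ₖ I_2)) = 2/3; in particular, the Bures discord of response of ρ_b is at most 1/3. -/

import Mathlib

open Matrix Kronecker
open scoped ComplexOrder

open scoped Classical in
/-- The positive semidefinite square root of a matrix (junk value `0` if not PSD). -/
noncomputable def msqrt {n : Type*} [Fintype n] [DecidableEq n] (A : Matrix n n ℂ) : Matrix n n ℂ :=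
  if h : A.PosSemidef then h.1.eigenvectorUnitary.1 * diagonal ((↑) ∘ Real.sqrt ∘ h.1.eigenvalues) *
    (star h.1.eigenvectorUnitary : Matrix n n ℂ) else 0

/-- Square-root fidelity `tr √(√ρ · σ · √ρ)` (as a real number). -/
noncomputable def sqrtFid {n : Type*} [Fintype n] [DecidableEq n] (ρ σ : Matrix n n ℂ) : ℝ :=
  ((msqrt (msqrt ρ * σ * msqrt ρ)).trace).re

/-- Trace norm `tr √(Xᴴ X)` (as a real number). -/
noncomputable def traceNorm {n : Type*} [Fintype n] [DecidableEq n] (X : Matrix n n ℂ) : ℝ :=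
  ((msqrt (Xᴴ * X)).trace).re

/-- The Bell-diagonal two-qubit state with Bell-basis eigenvalues `γ₁, γ₂, γ₃, γ₄`. -/
noncomputable def bellDiag (γ₁ γ₂ γ₃ γ₄ : ℝ) :
    Matrix (Fin 2 × Fin 2) (Fin 2 × Fin 2) ℂ :=
  Matrix.reindex finProdFinEquiv.symm finProdFinEquiv.symm
    ((1 / 2 : ℂ) • !![(γ₁ : ℂ) + γ₂, 0, 0, (γ₁ : ℂ) - γ₂;
        0, (γ₃ : ℂ) + γ₄, (γ₃ : ℂ) - γ₄, 0;
        0, (γ₃ : ℂ) - γ₄, (γ₃ : ℂ) + γ₄, 0;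
        (γ₁ : ℂ) - γ₂, 0, 0, (γ₁ : ℂ) + γ₂])
/-- The two-qubit state `(1/6)·[[1,0,0,1],[0,4−b,0,0],[0,0,b,0],[1,0,0,1]]`. -/
noncomputable def rhoB (b : ℝ) : Matrix (Fin 2 × Fin 2) (Fin 2 × Fin 2) ℂ :=
  Matrix.reindex finProdFinEquiv.symm finProdFinEquiv.symm
    ((1 / 6 : ℂ) • !![1, 0, 0, 1;
        0, (4 : ℂ) - (b : ℝ), 0, 0;
        0, 0, ((b : ℝ) : ℂ), 0;
        1, 0, 0, 1])

/-! ### Auxiliary lemmas -/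

lemma msqrt_eq_cfc {n : Type*} [Fintype n] [DecidableEq n] {A : Matrix n n ℂ}
    (hA : A.PosSemidef) : msqrt A = cfc Real.sqrt A := by
  rw [msqrt, dif_pos hA, hA.1.cfc_eq, IsHermitian.cfc, Unitary.conjStarAlgAut_apply]
  rfl

lemma psd_cfc_sqrt {n : Type*} [Fintype n] [DecidableEq n] {A : Matrix n n ℂ}
    (hA : A.PosSemidef) : (cfc Real.sqrt A).PosSemidef := by
  rw [hA.1.cfc_eq, IsHermitian.cfc, Unitary.conjStarAlgAut_apply]
  have hD : (diagonal (RCLike.ofReal ∘ Real.sqrt ∘ hA.1.eigenvalues) : Matrix n n ℂ).PosSemidef := by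
    rw [posSemidef_diagonal_iff]
    intro i
    simp only [Function.comp_apply]
    exact RCLike.ofReal_nonneg.mpr (Real.sqrt_nonneg _)
  have := hD.mul_mul_conjTranspose_same (hA.1.eigenvectorUnitary : Matrix n n ℂ)
  simpa [Matrix.star_eq_conjTranspose] using this

lemma spec_nonneg_of_psd {n : Type*} [Fintype n] [DecidableEq n] {B : Matrix n n ℂ}
    (hB : B.PosSemidef) : ∀ x ∈ spectrum ℝ B, 0 ≤ x := by
  intro x hx
  obtain ⟨i, rfl⟩ := hB.1.spectrum_real_eq_range_eigenvalues ▸ hx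
  exact hB.eigenvalues_nonneg i

lemma cfc_sqrt_mul_self {n : Type*} [Fintype n] [DecidableEq n] {A : Matrix n n ℂ}
    (hA : A.PosSemidef) : cfc Real.sqrt A * cfc Real.sqrt A = A := by
  have hsa : IsSelfAdjoint A := hA.1
  rw [← cfc_mul Real.sqrt Real.sqrt A]
  conv_rhs => rw [← cfc_id' ℝ A]
  apply cfc_congr
  intro x hx
  exact Real.mul_self_sqrt (spec_nonneg_of_psd hA x hx)

lemma cfc_sqrt_of_mul_self {n : Type*} [Fintype n] [DecidableEq n] {B : Matrix n n ℂ}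
    (hB : B.PosSemidef) : cfc Real.sqrt (B * B) = B := by
  have hsa : IsSelfAdjoint B := hB.1
  have e1 : cfc (fun x : ℝ => x * x) B = B * B := by
    rw [cfc_mul (fun x : ℝ => x) (fun x : ℝ => x) B, cfc_id' ℝ B]
  rw [← e1, ← cfc_comp Real.sqrt (fun x : ℝ => x * x) B]
  conv_rhs => rw [← cfc_id' ℝ B]
  apply cfc_congr
  intro x hx
  exact Real.sqrt_mul_self (spec_nonneg_of_psd hB x hx)

lemma msqrt_eq {n : Type*} [Fintype n] [DecidableEq n] {A B : Matrix n n ℂ}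
    (hB : B.PosSemidef) (h : B * B = A) : msqrt A = B := by
  have hA : A.PosSemidef := by
    rw [← h]
    have h2 := Matrix.posSemidef_conjTranspose_mul_self B
    rwa [hB.isHermitian.eq] at h2
  rw [msqrt_eq_cfc hA, ← h]
  exact cfc_sqrt_of_mul_self hB

lemma reindex_mul {n m : Type*} [Fintype n] [DecidableEq n] [Fintype m] [DecidableEq m]
    (e : n ≃ m) (A B : Matrix n n ℂ) :
    Matrix.reindex e e A * Matrix.reindex e e B = Matrix.reindex e e (A * B) := by
  simp [Matrix.reindex_apply, Matrix.submatrix_mul_equiv]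

lemma trace_reindex {n m : Type*} [Fintype n] [DecidableEq n] [Fintype m] [DecidableEq m]
    (e : n ≃ m) (A : Matrix n n ℂ) : (Matrix.reindex e e A).trace = A.trace := by
  simp only [Matrix.trace, Matrix.reindex_apply, Matrix.submatrix_apply, Matrix.diag]
  exact Equiv.sum_comp e.symm (fun j => A j j)

lemma psd_reindex {n m : Type*} [Fintype n] [DecidableEq n] [Fintype m] [DecidableEq m]
    (e : n ≃ m) {A : Matrix n n ℂ} (hA : A.PosSemidef) :
    (Matrix.reindex e e A).PosSemidef := by
  rw [Matrix.reindex_apply]; exact hA.submatrix _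

lemma mulRR (a s t : ℂ) :
    !![a,0,0,a; 0,s,0,0; 0,0,t,0; a,0,0,a] * !![a,0,0,a; 0,s,0,0; 0,0,t,0; a,0,0,a]
      = !![2*a^2,0,0,2*a^2; 0,s^2,0,0; 0,0,t^2,0; 2*a^2,0,0,2*a^2] := by
  ext i j
  fin_cases i <;> fin_cases j <;>
    simp [Matrix.mul_apply, Fin.sum_univ_four, Matrix.vecHead, Matrix.vecTail] <;> ring

lemma mulRSR (a s t p q r : ℂ) :
    !![a,0,0,a; 0,s,0,0; 0,0,t,0; a,0,0,a] * (!![p,0,0,-p; 0,q,0,0; 0,0,r,0; -p,0,0,p]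
      * !![a,0,0,a; 0,s,0,0; 0,0,t,0; a,0,0,a])
      = !![0,0,0,0; 0,q*s^2,0,0; 0,0,r*t^2,0; 0,0,0,0] := by
  ext i j
  fin_cases i <;> fin_cases j <;>
    simp [Matrix.mul_apply, Fin.sum_univ_four, Matrix.vecHead, Matrix.vecTail] <;> ring

lemma mulDrhoD (p q r : ℂ) :
    !![(1:ℂ),0,0,0; 0,1,0,0; 0,0,-1,0; 0,0,0,-1] * (!![p,0,0,p; 0,q,0,0; 0,0,r,0; p,0,0,p]
      * !![(1:ℂ),0,0,0; 0,1,0,0; 0,0,-1,0; 0,0,0,-1])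
      = !![p,0,0,-p; 0,q,0,0; 0,0,r,0; -p,0,0,p] := by
  ext i j
  fin_cases i <;> fin_cases j <;>
    simp [Matrix.mul_apply, Fin.sum_univ_four, Matrix.vecHead, Matrix.vecTail] <;> ring

lemma psd_R (x y z : ℝ) (hx : 0 ≤ x) (hy : 0 ≤ y) (hz : 0 ≤ z) :
    Matrix.PosSemidef !![((x:ℝ):ℂ),0,0,x; 0,y,0,0; 0,0,z,0; x,0,0,x] := by
  have key : !![((x:ℝ):ℂ),0,0,x; 0,y,0,0; 0,0,z,0; x,0,0,x] =
      (!![((Real.sqrt x : ℝ):ℂ),0,0,Real.sqrt x; 0,Real.sqrt y,0,0; 0,0,Real.sqrt z,0;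
        0,0,0,0])ᴴ * !![((Real.sqrt x : ℝ):ℂ),0,0,Real.sqrt x; 0,Real.sqrt y,0,0;
        0,0,Real.sqrt z,0; 0,0,0,0] := by
    ext i j
    fin_cases i <;> fin_cases j <;>
      simp [Matrix.mul_apply, Matrix.conjTranspose_apply, Fin.sum_univ_four,
        Matrix.vecHead, Matrix.vecTail, ← Complex.ofReal_mul, Real.mul_self_sqrt,
        hx, hy, hz]
  rw [key]
  exact Matrix.posSemidef_conjTranspose_mul_self _

lemma entry_mul_le {n : Type*} [Fintype n] (X Y : Matrix n n ℂ) {c d : ℝ}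
    (hX : ∀ i j, ‖X i j‖ ≤ c) (hY : ∀ i j, ‖Y i j‖ ≤ d) (hc : 0 ≤ c) (i j : n) :
    ‖(X * Y) i j‖ ≤ (Fintype.card n) * (c * d) := by
  rw [Matrix.mul_apply]
  refine (norm_sum_le _ _).trans ?_
  have hterm : ∀ k : n, ‖X i k * Y k j‖ ≤ c * d := by
    intro k
    rw [norm_mul]
    exact mul_le_mul (hX i k) (hY k j) (norm_nonneg _) hc
  calc ∑ k, ‖X i k * Y k j‖ ≤ ∑ _k : n, (c * d) := Finset.sum_le_sum fun k _ => hterm k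
    _ = (Fintype.card n) * (c * d) := by
        rw [Finset.sum_const, Finset.card_univ, nsmul_eq_mul]

lemma trace_msqrt_le {n : Type*} [Fintype n] [DecidableEq n] (A : Matrix n n ℂ) {K : ℝ}
    (hK : 0 ≤ K) (hA : ∀ i, ‖A i i‖ ≤ K) :
    ((msqrt A).trace).re ≤ (Fintype.card n) * Real.sqrt K := by
  by_cases h : A.PosSemidef
  · rw [msqrt_eq_cfc h]
    set B := cfc Real.sqrt A with hBdef
    have hB : B.PosSemidef := psd_cfc_sqrt h
    have hBB : B * B = A := cfc_sqrt_mul_self h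
    have key : ∀ i, (B i i).re ≤ Real.sqrt K := by
      intro i
      have hAii : (A i i).re = ∑ j, ‖B i j‖ ^ 2 := by
        rw [← hBB, Matrix.mul_apply, Complex.re_sum]
        refine Finset.sum_congr rfl fun j _ => ?_
        have hz : B j i = star (B i j) := by rw [← hB.isHermitian.apply i j, star_star]
        rw [hz, Complex.star_def, Complex.mul_conj, Complex.ofReal_re,
          Complex.normSq_eq_norm_sq]
      have h1 : ‖B i i‖ ^ 2 ≤ (A i i).re := by
        rw [hAii]
        exact Finset.single_le_sum (f := fun j => ‖B i j‖ ^ 2)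
          (fun j _ => sq_nonneg _) (Finset.mem_univ i)
      have h2 : (A i i).re ≤ K := le_trans (Complex.re_le_norm _)
        (by exact hA i)
      have h3 : (B i i).re ≤ ‖B i i‖ := by
        exact Complex.re_le_norm _
      exact h3.trans ((Real.le_sqrt (norm_nonneg _) hK).mpr (h1.trans h2))
    rw [Matrix.trace, Complex.re_sum]
    calc ∑ i, (B.diag i).re ≤ ∑ _i : n, Real.sqrt K :=
          Finset.sum_le_sum fun i _ => key i
      _ = (Fintype.card n) * Real.sqrt K := by
          rw [Finset.sum_const, Finset.card_univ, nsmul_eq_mul]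
  · rw [msqrt, dif_neg h]
    simp
    positivity

lemma unitary_entry_le {U : Matrix (Fin 2) (Fin 2) ℂ} (hU : Uᴴ * U = 1) (i j : Fin 2) :
    ‖U i j‖ ≤ 1 := by
  have h : (Uᴴ * U) j j = 1 := by rw [hU]; simp [Matrix.one_apply]
  rw [Matrix.mul_apply] at h
  have h2 : ∑ k, ‖U k j‖ ^ 2 = 1 := by
    have hre := congrArg Complex.re h
    rw [Complex.re_sum, Complex.one_re] at hre
    rw [← hre]
    refine Finset.sum_congr rfl fun k _ => ?_
    rw [Matrix.conjTranspose_apply, Complex.star_def, mul_comm, Complex.mul_conj,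
      Complex.ofReal_re, Complex.normSq_eq_norm_sq]
  have h3 : ‖U i j‖ ^ 2 ≤ 1 := by
    rw [← h2]
    exact Finset.single_le_sum (f := fun k => ‖U k j‖ ^ 2)
      (fun k _ => sq_nonneg _) (Finset.mem_univ i)
  nlinarith [norm_nonneg (U i j)]

def e4 : Fin 4 ≃ Fin 2 × Fin 2 := by exact (finProdFinEquiv (m := 2) (n := 2)).symm

set_option maxHeartbeats 1600000 in
theorem sqrtFidelity_rhoB_sigmaZ
    (b : ℝ) (hb0 : 0 ≤ b) (hb4 : b ≤ 4) :
    sqrtFid (rhoB b)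
        ((!![1, 0; 0, -1] ⊗ₖ (1 : Matrix (Fin 2) (Fin 2) ℂ)) * rhoB b *
          (!![1, 0; 0, -1] ⊗ₖ (1 : Matrix (Fin 2) (Fin 2) ℂ)))
      = 2 / 3 ∧
    sInf {r : ℝ | ∃ U : Matrix (Fin 2) (Fin 2) ℂ, Uᴴ * U = 1 ∧ U.trace = 0 ∧
        r = 1 - sqrtFid (rhoB b)
          ((U ⊗ₖ (1 : Matrix (Fin 2) (Fin 2) ℂ)) * rhoB b *
            (U ⊗ₖ (1 : Matrix (Fin 2) (Fin 2) ℂ))ᴴ)} ≤ 1 / 3 := by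
  -- basic real facts
  have h46 : (0:ℝ) ≤ (4 - b)/6 := by linarith
  have hb6 : (0:ℝ) ≤ b/6 := by linarith
  have ha0 : (0:ℝ) ≤ Real.sqrt 3 / 6 := by positivity
  set a : ℝ := Real.sqrt 3 / 6 with hadef
  set s : ℝ := Real.sqrt ((4 - b)/6) with hsdef
  set t : ℝ := Real.sqrt (b/6) with htdef
  have hs0 : (0:ℝ) ≤ s := Real.sqrt_nonneg _
  have ht0 : (0:ℝ) ≤ t := Real.sqrt_nonneg _
  have ha1 : a ≤ 1 := by
    rw [hadef]
    nlinarith [Real.sq_sqrt (show (0:ℝ) ≤ 3 by norm_num), Real.sqrt_nonneg 3]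
  have hs1 : s ≤ 1 := by
    rw [hsdef]
    nlinarith [Real.sq_sqrt h46, Real.sqrt_nonneg ((4-b)/6)]
  have ht1 : t ≤ 1 := by
    rw [htdef]
    nlinarith [Real.sq_sqrt hb6, Real.sqrt_nonneg (b/6)]
  have ha2 : ((a:ℝ):ℂ)^2 = 1/12 := by
    rw [← Complex.ofReal_pow, hadef, div_pow, Real.sq_sqrt (by norm_num : (0:ℝ) ≤ 3)]
    norm_num
  have hs2 : ((s:ℝ):ℂ)^2 = ((4 - b : ℝ):ℂ)/6 := by
    rw [← Complex.ofReal_pow, hsdef, Real.sq_sqrt h46]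
    push_cast; ring
  have ht2 : ((t:ℝ):ℂ)^2 = ((b:ℝ):ℂ)/6 := by
    rw [← Complex.ofReal_pow, htdef, Real.sq_sqrt hb6]
    push_cast; ring
  -- the 4x4 representative of rhoB
  have hrho : rhoB b = Matrix.reindex e4 e4
      !![(1/6:ℂ),0,0,1/6; 0,((4:ℂ)-(b:ℝ))/6,0,0; 0,0,((b:ℝ):ℂ)/6,0; 1/6,0,0,1/6] := by
    rw [show rhoB b = Matrix.reindex e4 e4 ((1 / 6 : ℂ) • !![1, 0, 0, 1;
        0, (4 : ℂ) - (b : ℝ), 0, 0;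
        0, 0, ((b : ℝ) : ℂ), 0;
        1, 0, 0, 1]) from rfl]
    congr 1
    ext i j
    fin_cases i <;> fin_cases j <;>
      simp [Matrix.vecHead, Matrix.vecTail] <;> ring
  -- msqrt of rhoB
  have hR : Matrix.PosSemidef !![((a:ℝ):ℂ),0,0,a; 0,s,0,0; 0,0,t,0; a,0,0,a] :=
    psd_R a s t ha0 hs0 ht0
  have hsq : msqrt (rhoB b) =
      Matrix.reindex e4 e4 !![((a:ℝ):ℂ),0,0,a; 0,s,0,0; 0,0,t,0; a,0,0,a] := by
    apply msqrt_eq (psd_reindex e4 hR)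
    rw [reindex_mul, mulRR, hrho]
    congr 1
    ext i j
    fin_cases i <;> fin_cases j <;>
      simp [Matrix.vecHead, Matrix.vecTail, ha2, hs2, ht2] <;> ring
  -- the conjugated state
  have hD : (!![1, 0; 0, -1] ⊗ₖ (1 : Matrix (Fin 2) (Fin 2) ℂ)) =
      Matrix.reindex e4 e4 !![(1:ℂ),0,0,0; 0,1,0,0; 0,0,-1,0; 0,0,0,-1] := by
    ext ⟨i,k⟩ ⟨j,l⟩
    fin_cases i <;> fin_cases k <;> fin_cases j <;> fin_cases l <;>
      simp [Matrix.kroneckerMap_apply, Matrix.one_apply, finProdFinEquiv,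
        Matrix.vecHead, Matrix.vecTail, e4]
  have hsig : (!![1, 0; 0, -1] ⊗ₖ (1 : Matrix (Fin 2) (Fin 2) ℂ)) * rhoB b *
      (!![1, 0; 0, -1] ⊗ₖ (1 : Matrix (Fin 2) (Fin 2) ℂ)) =
      Matrix.reindex e4 e4
        !![(1/6:ℂ),0,0,-(1/6); 0,((4:ℂ)-(b:ℝ))/6,0,0; 0,0,((b:ℝ):ℂ)/6,0; -(1/6),0,0,1/6] := by
    rw [hD, hrho, mul_assoc, reindex_mul, reindex_mul, mulDrhoD]
  -- inner product
  have hM : msqrt (rhoB b) * ((!![1, 0; 0, -1] ⊗ₖ (1 : Matrix (Fin 2) (Fin 2) ℂ)) * rhoB b *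
      (!![1, 0; 0, -1] ⊗ₖ (1 : Matrix (Fin 2) (Fin 2) ℂ))) * msqrt (rhoB b) =
      Matrix.reindex e4 e4
        !![(0:ℂ),0,0,0; 0,(((4:ℂ)-(b:ℝ))/6)*((s:ℝ):ℂ)^2,0,0;
           0,0,(((b:ℝ):ℂ)/6)*((t:ℝ):ℂ)^2,0; 0,0,0,0] := by
    rw [hsq, hsig, mul_assoc, reindex_mul, reindex_mul, mulRSR]
  have hN : Matrix.PosSemidef !![((0:ℝ):ℂ),0,0,(0:ℝ); 0,(((4-b)/6:ℝ):ℂ),0,0;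
      0,0,((b/6:ℝ):ℂ),0; (0:ℝ),0,0,(0:ℝ)] := psd_R 0 _ _ le_rfl h46 hb6
  have hfinal : msqrt (msqrt (rhoB b) * ((!![1, 0; 0, -1] ⊗ₖ (1 : Matrix (Fin 2) (Fin 2) ℂ)) * rhoB b *
      (!![1, 0; 0, -1] ⊗ₖ (1 : Matrix (Fin 2) (Fin 2) ℂ))) * msqrt (rhoB b)) =
      Matrix.reindex e4 e4 !![((0:ℝ):ℂ),0,0,(0:ℝ); 0,(((4-b)/6:ℝ):ℂ),0,0;
      0,0,((b/6:ℝ):ℂ),0; (0:ℝ),0,0,(0:ℝ)] := by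
    apply msqrt_eq (psd_reindex e4 hN)
    rw [reindex_mul, hM]
    congr 1
    ext i j
    fin_cases i <;> fin_cases j <;>
      simp [Matrix.mul_apply, Fin.sum_univ_four, Matrix.vecHead, Matrix.vecTail, hs2, ht2] <;>
      push_cast <;> ring
  have part1 : sqrtFid (rhoB b)
        ((!![1, 0; 0, -1] ⊗ₖ (1 : Matrix (Fin 2) (Fin 2) ℂ)) * rhoB b *
          (!![1, 0; 0, -1] ⊗ₖ (1 : Matrix (Fin 2) (Fin 2) ℂ)))
      = 2 / 3 := by
    rw [sqrtFid, hfinal, trace_reindex]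
    simp [Matrix.trace, Fin.sum_univ_four, Matrix.vecHead, Matrix.vecTail]
    ring
  refine ⟨part1, ?_⟩
  -- part 2
  -- entry bounds
  have hRent : ∀ p q : Fin 4, ‖(!![((a:ℝ):ℂ),0,0,a; 0,s,0,0; 0,0,t,0; a,0,0,a]) p q‖ ≤ 1 := by
    intro p q
    fin_cases p <;> fin_cases q <;>
      simp [Matrix.vecHead, Matrix.vecTail, Complex.norm_real, abs_of_nonneg, ha0, hs0, ht0] <;>
      first | assumption | norm_num
  have hSE : ∀ p q, ‖(msqrt (rhoB b)) p q‖ ≤ 1 := by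
    intro p q
    rw [hsq]
    simp only [Matrix.reindex_apply, Matrix.submatrix_apply]
    exact hRent _ _
  have hrhoEnt : ∀ p q : Fin 4,
      ‖(!![(1/6:ℂ),0,0,1/6; 0,((4:ℂ)-(b:ℝ))/6,0,0; 0,0,((b:ℝ):ℂ)/6,0; 1/6,0,0,1/6]) p q‖
        ≤ 2/3 := by
    have habs : ‖(4:ℂ) - (b:ℝ)‖ = 4 - b := by
      rw [show ((4:ℂ) - (b:ℝ)) = (((4 - b : ℝ)):ℂ) by push_cast; ring, Complex.norm_real,
        Real.norm_eq_abs, abs_of_nonneg (by linarith)]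
    have habsb : ‖((b:ℝ):ℂ)‖ = b := by
      rw [Complex.norm_real, Real.norm_eq_abs, abs_of_nonneg hb0]
    intro p q
    fin_cases p <;> fin_cases q <;>
      simp [Matrix.vecHead, Matrix.vecTail, habs, habsb, abs_of_nonneg hb0] <;>
      first | linarith | norm_num
  have hrhoE : ∀ p q, ‖rhoB b p q‖ ≤ 2/3 := by
    intro p q
    rw [hrho]
    simp only [Matrix.reindex_apply, Matrix.submatrix_apply]
    exact hrhoEnt _ _
  -- the fidelity bound for arbitrary unitary U
  have hfidle : ∀ U : Matrix (Fin 2) (Fin 2) ℂ, Uᴴ * U = 1 →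
      sqrtFid (rhoB b) ((U ⊗ₖ (1 : Matrix (Fin 2) (Fin 2) ℂ)) * rhoB b *
        (U ⊗ₖ (1 : Matrix (Fin 2) (Fin 2) ℂ))ᴴ) ≤ 4 * Real.sqrt (512/3) := by
    intro U hUu
    have hUe : ∀ i j, ‖U i j‖ ≤ 1 := unitary_entry_le hUu
    have hW : ∀ p q, ‖(U ⊗ₖ (1 : Matrix (Fin 2) (Fin 2) ℂ)) p q‖ ≤ 1 := by
      rintro ⟨i,k⟩ ⟨j,l⟩
      rw [Matrix.kroneckerMap_apply, norm_mul]
      by_cases hkl : k = l <;>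
        simp [Matrix.one_apply, hkl] <;>
      exact hUe i j
    have hWH : ∀ p q, ‖(U ⊗ₖ (1 : Matrix (Fin 2) (Fin 2) ℂ))ᴴ p q‖ ≤ 1 := by
      intro p q
      rw [Matrix.conjTranspose_apply, norm_star]
      exact hW q p
    have m1 : ∀ p q, ‖((U ⊗ₖ (1 : Matrix (Fin 2) (Fin 2) ℂ)) * rhoB b) p q‖ ≤ 8/3 := by
      intro p q
      refine le_trans (entry_mul_le _ _ hW hrhoE zero_le_one p q) ?_
      norm_num
    have m2 : ∀ p q, ‖((U ⊗ₖ (1 : Matrix (Fin 2) (Fin 2) ℂ)) * rhoB b *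
        (U ⊗ₖ (1 : Matrix (Fin 2) (Fin 2) ℂ))ᴴ) p q‖ ≤ 32/3 := by
      intro p q
      refine le_trans (entry_mul_le _ _ m1 hWH (by norm_num) p q) ?_
      norm_num
    have m3 : ∀ p q, ‖(msqrt (rhoB b) * ((U ⊗ₖ (1 : Matrix (Fin 2) (Fin 2) ℂ)) * rhoB b *
        (U ⊗ₖ (1 : Matrix (Fin 2) (Fin 2) ℂ))ᴴ)) p q‖ ≤ 128/3 := by
      intro p q
      refine le_trans (entry_mul_le _ _ hSE m2 zero_le_one p q) ?_
      norm_num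
    have m4 : ∀ p : Fin 2 × Fin 2, ‖(msqrt (rhoB b) * ((U ⊗ₖ (1 : Matrix (Fin 2) (Fin 2) ℂ)) * rhoB b *
        (U ⊗ₖ (1 : Matrix (Fin 2) (Fin 2) ℂ))ᴴ) * msqrt (rhoB b)) p p‖ ≤ 512/3 := by
      intro p
      refine le_trans (entry_mul_le _ _ m3 hSE (by norm_num) p p) ?_
      norm_num
    rw [sqrtFid]
    refine le_trans (trace_msqrt_le _ (by norm_num) m4) ?_
    norm_num
  -- membership of 1/3
  have hDH : (!![1, 0; 0, -1] ⊗ₖ (1 : Matrix (Fin 2) (Fin 2) ℂ))ᴴ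
      = !![1, 0; 0, -1] ⊗ₖ (1 : Matrix (Fin 2) (Fin 2) ℂ) := by
    ext ⟨i,k⟩ ⟨j,l⟩
    fin_cases i <;> fin_cases k <;> fin_cases j <;> fin_cases l <;>
      simp [Matrix.conjTranspose_apply, Matrix.kroneckerMap_apply, Matrix.one_apply,
        Matrix.vecHead, Matrix.vecTail]
  have hmem : (1/3 : ℝ) ∈ {r : ℝ | ∃ U : Matrix (Fin 2) (Fin 2) ℂ, Uᴴ * U = 1 ∧ U.trace = 0 ∧
      r = 1 - sqrtFid (rhoB b)
        ((U ⊗ₖ (1 : Matrix (Fin 2) (Fin 2) ℂ)) * rhoB b *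
          (U ⊗ₖ (1 : Matrix (Fin 2) (Fin 2) ℂ))ᴴ)} := by
    refine ⟨!![1, 0; 0, -1], ?_, ?_, ?_⟩
    · ext i j
      fin_cases i <;> fin_cases j <;>
        simp [Matrix.mul_apply, Fin.sum_univ_two, Matrix.one_apply,
          Matrix.conjTranspose_apply, Matrix.vecHead, Matrix.vecTail]
    · simp [Matrix.trace_fin_two_of]
    · rw [hDH, part1]
      norm_num
  have hbdd : BddBelow {r : ℝ | ∃ U : Matrix (Fin 2) (Fin 2) ℂ, Uᴴ * U = 1 ∧ U.trace = 0 ∧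
      r = 1 - sqrtFid (rhoB b)
        ((U ⊗ₖ (1 : Matrix (Fin 2) (Fin 2) ℂ)) * rhoB b *
          (U ⊗ₖ (1 : Matrix (Fin 2) (Fin 2) ℂ))ᴴ)} := by
    refine ⟨1 - 4 * Real.sqrt (512/3), ?_⟩
    rintro r ⟨U, hUu, -, rfl⟩
    have := hfidle U hUu
    linarith
  calc sInf _ ≤ (1/3 : ℝ) := csInf_le hbdd hmem
    _ ≤ 1/3 := le_rfl
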